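/- Let R be a ring with left stable range 1. If p, q, d ∈ R satisfy Rp + Rq = Rd, then there exist t ∈ R and a unit u ∈ R* such that tp + q = ud. -/
import Mathlib


/-- If `R` has left stable range 1 and `Rp + Rq = Rd`, then there exist `t ∈ R` and a
unit `u` with `tp + q = ud`. -/
theorem stable_range_one_unit_linear_comb {R : Type*} [Ring R]
    (hsr : ∀ p q : R, Ideal.span {p} ⊔ Ideal.span {q} = ⊤ → ∃ t : R, IsUnit (t * p + q))
    (p q d : R) (h : Ideal.span {p} ⊔ Ideal.span {q} = Ideal.span {d}) :
    ∃ (t : R) (u : Rˣ), t * p + q = (u : R) * d := by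
  -- p ∈ Rd
  have hp : p ∈ Ideal.span ({d} : Set R) := by
    rw [← h]; exact Submodule.mem_sup_left (Ideal.subset_span rfl)
  have hq : q ∈ Ideal.span ({d} : Set R) := by
    rw [← h]; exact Submodule.mem_sup_right (Ideal.subset_span rfl)
  obtain ⟨p₁, hp₁⟩ := Submodule.mem_span_singleton.mp hp
  obtain ⟨q₁, hq₁⟩ := Submodule.mem_span_singleton.mp hq
  -- d ∈ Rp + Rq
  have hd : d ∈ Ideal.span ({p} : Set R) ⊔ Ideal.span ({q} : Set R) := by
    rw [h]; exact Ideal.subset_span rfl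
  obtain ⟨x, hx, y, hy, hxy⟩ := Submodule.mem_sup.mp hd
  obtain ⟨a, ha⟩ := Submodule.mem_span_singleton.mp hx
  obtain ⟨b, hb⟩ := Submodule.mem_span_singleton.mp hy
  simp only [smul_eq_mul] at hp₁ hq₁ ha hb
  -- g annihilates d
  set g : R := 1 - a * p₁ - b * q₁ with hg
  have hgd : g * d = 0 := by
    have : (a * p₁ + b * q₁) * d = d := by
      rw [add_mul, mul_assoc, mul_assoc, hp₁, hq₁, ha, hb, hxy]
    rw [hg, sub_mul, sub_mul, one_mul, sub_sub, ← add_mul, this, sub_self]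
  set m : R := a * p₁ + g with hm
  have hmq : m + b * q₁ = 1 := by rw [hm, hg]; noncomm_ring
  have htop : Ideal.span ({m} : Set R) ⊔ Ideal.span ({q₁} : Set R) = ⊤ := by
    rw [Ideal.eq_top_iff_one]
    exact hmq ▸ Submodule.add_mem_sup (Ideal.mem_span_singleton_self m)
      (Ideal.mem_span_singleton'.mpr ⟨b, rfl⟩)
  obtain ⟨t, ht⟩ := hsr m q₁ htop
  obtain ⟨u, hu⟩ := ht
  refine ⟨t * a, u, ?_⟩
  have key : (t * m + q₁) * d = t * a * p + q := by
    simp only [hm, mul_add, add_mul, mul_assoc]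
    rw [hgd, mul_zero, add_zero, hp₁, hq₁, ← mul_assoc]
  rw [hu]
  exact key.symm
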